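/- For every natural number n there exists a unique finitely supported sequence d : ℕ → {0,1} such that n = Σ_j d(j)·S(j) and, for every j ≥ 0, Σ_{i=0}^{j} d(i)·S(i) < S(j+1). -/

import Mathlib

private lemma finsum_range (f : ℕ → ℕ) (N : ℕ) (h : ∀ j, N ≤ j → f j = 0) :
    ∑ᶠ j, f j = ∑ j ∈ Finset.range N, f j := by
  apply finsum_eq_finset_sum_of_support_subset
  intro j hj
  simp only [Function.mem_support] at hj
  simp only [Finset.coe_range, Set.mem_Iio]
  by_contra hc
  exact hj (h j (not_lt.mp hc))

private lemma exists_rep (S : ℕ → ℕ) (hS : StrictMono S) (hS0 : S 0 = 1)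
    (hS2 : ∀ j, S (j + 1) ≤ 2 * S j) (n : ℕ) :
    ∃ d : ℕ → Bool, (∀ j, d j = true → S j ≤ n) ∧
      n = ∑ᶠ j, (d j).toNat * S j ∧
      ∀ j, ∑ i ∈ Finset.range (j + 1), (d i).toNat * S i < S (j + 1) := by
  induction n using Nat.strong_induction_on with
  | _ n IH =>
  rcases Nat.eq_zero_or_pos n with h0 | hpos
  · refine ⟨fun _ => false, by simp, ?_, ?_⟩
    · rw [h0, finsum_range _ 0 (by simp)]; simp
    · intro j
      simp only [Bool.toNat_false, zero_mul, Finset.sum_const_zero]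
      have : S 0 < S (j + 1) ∨ S 0 = S (j+1) := by
        rcases Nat.lt_or_ge 0 (j+1) with h | h
        · exact Or.inl (hS h)
        · omega
      omega
  · set k := Nat.findGreatest (fun j => S j ≤ n) n with hkdef
    have hk : S k ≤ n := Nat.findGreatest_spec (P := fun j => S j ≤ n) (m := 0) (Nat.zero_le n) (by show S 0 ≤ n; rw [hS0]; omega)
    have hk1 : n < S (k + 1) := by
      rcases Nat.lt_or_ge n (k + 1) with h | h
      · calc n < k + 1 := h
          _ ≤ S (k + 1) := hS.le_apply
      · by_contra hc
        exact Nat.findGreatest_is_greatest (Nat.lt_succ_self k) h (not_lt.mp hc)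
    have hSk1 : 1 ≤ S k := by
      rcases Nat.eq_zero_or_pos k with h | h
      · rw [h, hS0]
      · have := hS (show 0 < k from h); omega
    have hm : n - S k < n := by omega
    obtain ⟨d', hd'le, hd'sum, hd'part⟩ := IH (n - S k) hm
    have hmk : n - S k < S k := by have := hS2 k; omega
    have hd'0 : ∀ j, k ≤ j → d' j = false := by
      intro j hj
      cases hdj : d' j with
      | false => rfl
      | true =>
        have h1 := hd'le j hdj
        have h2 : S k ≤ S j := hS.monotone hj
        omega
    refine ⟨Function.update d' k true, ?_, ?_, ?_⟩
    · intro j hj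
      rcases eq_or_ne j k with rfl | hne
      · exact hk
      · rw [Function.update_of_ne hne] at hj
        exact le_trans (hd'le j hj) (Nat.sub_le n (S k))
    · have hz : ∀ j, k + 1 ≤ j → (Function.update d' k true j).toNat * S j = 0 := by
        intro j hj
        rw [Function.update_of_ne (by omega), hd'0 j (by omega)]
        simp
      rw [finsum_range _ (k + 1) hz, Finset.sum_range_succ, Function.update_self]
      have hrw : ∀ i ∈ Finset.range k, (Function.update d' k true i).toNat * S i
          = (d' i).toNat * S i := by
        intro i hi
        rw [Function.update_of_ne (by simp at hi; omega)]
      rw [Finset.sum_congr rfl hrw, ← finsum_range _ k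
        (fun j hj => by rw [hd'0 j hj]; simp), ← hd'sum]
      simp
      omega
    · intro j
      rcases Nat.lt_or_ge j k with hj | hj
      · have hrw : ∀ i ∈ Finset.range (j + 1), (Function.update d' k true i).toNat * S i
            = (d' i).toNat * S i := by
          intro i hi
          rw [Function.update_of_ne (by simp at hi; omega)]
        rw [Finset.sum_congr rfl hrw]
        exact hd'part j
      · have hsub : Finset.range (k + 1) ⊆ Finset.range (j + 1) :=
          Finset.range_subset_range.mpr (by omega)
        have heq : ∑ i ∈ Finset.range (j + 1), (Function.update d' k true i).toNat * S i
            = ∑ i ∈ Finset.range (k + 1), (Function.update d' k true i).toNat * S i := by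
          symm
          apply Finset.sum_subset hsub
          intro x _ hx
          simp only [Finset.mem_range, not_lt] at hx
          rw [Function.update_of_ne (by omega), hd'0 x (by omega)]
          simp
        rw [heq, Finset.sum_range_succ, Function.update_self]
        have hrw : ∀ i ∈ Finset.range k, (Function.update d' k true i).toNat * S i
            = (d' i).toNat * S i := by
          intro i hi
          rw [Function.update_of_ne (by simp at hi; omega)]
        rw [Finset.sum_congr rfl hrw]
        have hsum' : ∑ i ∈ Finset.range k, (d' i).toNat * S i = n - S k := by
          rw [← finsum_range _ k (fun j hj => by rw [hd'0 j hj]; simp)]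
          exact hd'sum.symm
        have : S (k + 1) ≤ S (j + 1) := hS.monotone (by omega)
        simp only [Bool.toNat_true, one_mul]
        omega

private lemma key_contra (S : ℕ → ℕ) (hS : StrictMono S) (hS0 : S 0 = 1) (n : ℕ)
    (d e : ℕ → Bool)
    (hdsum : n = ∑ᶠ j, (d j).toNat * S j)
    (hesum : n = ∑ᶠ j, (e j).toNat * S j)
    (hepart : ∀ j, ∑ i ∈ Finset.range (j + 1), (e i).toNat * S i < S (j + 1))
    (hdf : {j | d j = true}.Finite) (hef : {j | e j = true}.Finite)
    (k : ℕ) (hdk : d k = true) (hek : e k = false)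
    (hhigh : ∀ i, k < i → d i = e i) : False := by
  obtain ⟨N₁, hN₁⟩ := hdf.bddAbove
  obtain ⟨N₂, hN₂⟩ := hef.bddAbove
  set N := max (k + 1) (max N₁ N₂ + 1) with hN
  have hd0 : ∀ j, N ≤ j → (d j).toNat * S j = 0 := by
    intro j hj
    cases hdj : d j with
    | false => simp
    | true => exact absurd (hN₁ hdj) (by omega)
  have he0 : ∀ j, N ≤ j → (e j).toNat * S j = 0 := by
    intro j hj
    cases hej : e j with
    | false => simp
    | true => exact absurd (hN₂ hej) (by omega)
  have hdN : n = ∑ j ∈ Finset.range N, (d j).toNat * S j := by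
    rw [hdsum, finsum_range _ N hd0]
  have heN : n = ∑ j ∈ Finset.range N, (e j).toNat * S j := by
    rw [hesum, finsum_range _ N he0]
  have hk1N : k + 1 ≤ N := by omega
  have hsplit : ∀ f : ℕ → Bool, ∑ j ∈ Finset.range N, (f j).toNat * S j
      = ∑ j ∈ Finset.range (k + 1), (f j).toNat * S j
        + ∑ j ∈ Finset.Ico (k + 1) N, (f j).toNat * S j := by
    intro f
    rw [Finset.range_eq_Ico, ← Finset.sum_Ico_consecutive _ (Nat.zero_le _) hk1N, ← Finset.range_eq_Ico]
  have hIco : ∑ j ∈ Finset.Ico (k + 1) N, (d j).toNat * S j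
      = ∑ j ∈ Finset.Ico (k + 1) N, (e j).toNat * S j := by
    apply Finset.sum_congr rfl
    intro i hi
    simp only [Finset.mem_Ico] at hi
    rw [hhigh i (by omega)]
  have hAB : ∑ j ∈ Finset.range (k + 1), (d j).toNat * S j
      = ∑ j ∈ Finset.range (k + 1), (e j).toNat * S j := by
    have h1 := hsplit d
    have h2 := hsplit e
    rw [← hdN] at h1; rw [← heN] at h2
    omega
  have hA : S k ≤ ∑ j ∈ Finset.range (k + 1), (d j).toNat * S j := by
    have := Finset.single_le_sum (f := fun j => (d j).toNat * S j)
      (fun i _ => Nat.zero_le _) (Finset.self_mem_range_succ k)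
    simpa [hdk] using this
  have hB : ∑ j ∈ Finset.range (k + 1), (e j).toNat * S j < S k := by
    rw [Finset.sum_range_succ, hek]
    simp only [Bool.toNat_false, zero_mul, add_zero]
    rcases Nat.eq_zero_or_pos k with rfl | hkpos
    · simp [hS0]
    · obtain ⟨j, rfl⟩ := Nat.exists_eq_add_of_lt hkpos
      simpa using hepart j
  omega

/-- Let `S : ℕ → ℕ` be a strictly increasing sequence with `S 0 = 1`
and `S (j+1) ≤ 2 * S j` for all `j`. Then for every natural number `n` there exists a
unique finitely supported sequence `d : ℕ → {0,1}` (modelled as `d : ℕ → Bool`) such that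
`n = Σ_j d j * S j` and, for every `j ≥ 0`, `Σ_{i=0}^{j} d i * S i < S (j+1)`. -/
theorem stmt_0 (S : ℕ → ℕ) (hS : StrictMono S) (hS0 : S 0 = 1)
    (hS2 : ∀ j, S (j + 1) ≤ 2 * S j) (n : ℕ) :
    ∃! d : ℕ → Bool,
      {j | d j = true}.Finite ∧
      n = ∑ᶠ j, (d j).toNat * S j ∧
      ∀ j, ∑ i ∈ Finset.range (j + 1), (d i).toNat * S i < S (j + 1) := by
  obtain ⟨d, hdle, hdsum, hdpart⟩ := exists_rep S hS hS0 hS2 n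
  have hdf : {j | d j = true}.Finite := by
    apply (Set.finite_Iic n).subset
    intro j hj
    exact le_trans hS.le_apply (hdle j hj)
  refine ⟨d, ⟨hdf, hdsum, hdpart⟩, ?_⟩
  rintro e ⟨hef, hesum, hepart⟩
  by_contra hne
  have hT : ∃ j, ¬ e j = d j := by
    by_contra hc
    push_neg at hc
    exact hne (funext hc)
  obtain ⟨N₁, hN₁⟩ := hdf.bddAbove
  obtain ⟨N₂, hN₂⟩ := hef.bddAbove
  set N := max N₁ N₂ with hNdef
  have hbound : ∀ j, e j ≠ d j → j ≤ N := by
    intro j hj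
    cases hej : e j with
    | true => exact le_trans (hN₂ hej) (le_max_right _ _)
    | false =>
      cases hdj : d j with
      | true => exact le_trans (hN₁ hdj) (le_max_left _ _)
      | false => exact absurd (hej.trans hdj.symm) hj
  obtain ⟨j₀, hj₀⟩ := hT
  set k := Nat.findGreatest (fun j => e j ≠ d j) N with hkdef
  have hk : e k ≠ d k := Nat.findGreatest_spec (P := fun j => e j ≠ d j) (hbound j₀ hj₀) hj₀
  have hhigh : ∀ i, k < i → e i = d i := by
    intro i hi
    by_contra hc
    exact Nat.findGreatest_is_greatest hi (hbound i hc) hc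
  cases hek : e k with
  | true =>
    have hdk : d k = false := by
      cases hdk : d k with
      | false => rfl
      | true => exact absurd (hek.trans hdk.symm) hk
    exact key_contra S hS hS0 n e d hesum hdsum hdpart hef hdf k hek hdk hhigh
  | false =>
    have hdk : d k = true := by
      cases hdk : d k with
      | true => rfl
      | false => exact absurd (hek.trans hdk.symm) hk
    exact key_contra S hS hS0 n d e hdsum hesum hepart hdf hef k hdk hek (fun i hi => (hhigh i hi).symm)
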